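/- For every μ > 0, the function x ↦ f(x;μ) is differentiable at every x ∈ ℝ^n, and its gradient at x equals Σ_{i=1}^m λ_i(x;μ) · (x − c_i)/g_i(x;μ). -/

import Mathlib

open Real Filter

noncomputable section

variable {n m : ℕ}

/-- `g_i(x;μ) = √(‖x − c_i‖² + μ²)`. -/
def sebG (c : Fin m → EuclideanSpace ℝ (Fin n)) (μ : ℝ) (x : EuclideanSpace ℝ (Fin n))
    (i : Fin m) : ℝ :=
  Real.sqrt (‖x - c i‖ ^ 2 + μ ^ 2)

/-- `f_i(x;μ) = g_i(x;μ) + r_i`. -/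
def sebFi (c : Fin m → EuclideanSpace ℝ (Fin n)) (r : Fin m → ℝ) (μ : ℝ)
    (x : EuclideanSpace ℝ (Fin n)) (i : Fin m) : ℝ :=
  sebG c μ x i + r i

/-- the log-exponential aggregation function `f(x;μ) = μ ln(Σ_i exp(f_i(x;μ)/μ))`. -/
def sebFmu (c : Fin m → EuclideanSpace ℝ (Fin n)) (r : Fin m → ℝ) (μ : ℝ)
    (x : EuclideanSpace ℝ (Fin n)) : ℝ :=
  μ * Real.log (∑ i : Fin m, Real.exp (sebFi c r μ x i / μ))

/-- `f(x) = max_i (‖x − c_i‖ + r_i)`. -/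
def sebF (c : Fin m → EuclideanSpace ℝ (Fin n)) (r : Fin m → ℝ)
    (x : EuclideanSpace ℝ (Fin n)) : ℝ :=
  ⨆ i : Fin m, (‖x - c i‖ + r i)

/-- `f_∞(x;μ) = max_i f_i(x;μ)`. -/
def sebFinf (c : Fin m → EuclideanSpace ℝ (Fin n)) (r : Fin m → ℝ) (μ : ℝ)
    (x : EuclideanSpace ℝ (Fin n)) : ℝ :=
  ⨆ i : Fin m, sebFi c r μ x i

/-- `λ_i(x;μ)`. -/
def sebLam (c : Fin m → EuclideanSpace ℝ (Fin n)) (r : Fin m → ℝ) (μ : ℝ)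
    (x : EuclideanSpace ℝ (Fin n)) (i : Fin m) : ℝ :=
  Real.exp (sebFi c r μ x i / μ) / ∑ j : Fin m, Real.exp (sebFi c r μ x j / μ)

/-- `∇f_i(x;μ) = (x − c_i)/g_i(x;μ)`. -/
def sebGradI (c : Fin m → EuclideanSpace ℝ (Fin n)) (μ : ℝ)
    (x : EuclideanSpace ℝ (Fin n)) (i : Fin m) : EuclideanSpace ℝ (Fin n) :=
  (sebG c μ x i)⁻¹ • (x - c i)

/-- `∇f(x;μ) = Σ_i λ_i(x;μ) ∇f_i(x;μ)`. -/
def sebGrad (c : Fin m → EuclideanSpace ℝ (Fin n)) (r : Fin m → ℝ) (μ : ℝ)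
    (x : EuclideanSpace ℝ (Fin n)) : EuclideanSpace ℝ (Fin n) :=
  ∑ i : Fin m, sebLam c r μ x i • sebGradI c μ x i

/-- `S(x;μ,ε) = {i : λ_i(x;μ) ≥ ε}`. -/
def sebS (c : Fin m → EuclideanSpace ℝ (Fin n)) (r : Fin m → ℝ) (μ ε : ℝ)
    (x : EuclideanSpace ℝ (Fin n)) : Finset (Fin m) :=
  Finset.univ.filter (fun i => ε ≤ sebLam c r μ x i)

/-- `λ̃_i(x;μ)`. -/
def sebLamT (c : Fin m → EuclideanSpace ℝ (Fin n)) (r : Fin m → ℝ) (μ ε : ℝ)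
    (x : EuclideanSpace ℝ (Fin n)) (i : Fin m) : ℝ :=
  Real.exp (sebFi c r μ x i / μ) / ∑ j ∈ sebS c r μ ε x, Real.exp (sebFi c r μ x j / μ)

/-- the truncated log-exponential function `f̃(x;μ)`. -/
def sebFmuT (c : Fin m → EuclideanSpace ℝ (Fin n)) (r : Fin m → ℝ) (μ ε : ℝ)
    (x : EuclideanSpace ℝ (Fin n)) : ℝ :=
  μ * Real.log (∑ i ∈ sebS c r μ ε x, Real.exp (sebFi c r μ x i / μ))

/-- `∇f̃(x;μ) = Σ_{i∈S} λ̃_i(x;μ) ∇f_i(x;μ)`. -/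
def sebGradT (c : Fin m → EuclideanSpace ℝ (Fin n)) (r : Fin m → ℝ) (μ ε : ℝ)
    (x : EuclideanSpace ℝ (Fin n)) : EuclideanSpace ℝ (Fin n) :=
  ∑ i ∈ sebS c r μ ε x, sebLamT c r μ ε x i • sebGradI c μ x i

/-- `∇²f_i(x;μ) = (1/g_i) I_n − (x−c_i)(x−c_i)ᵀ/g_i³` as an `n×n` matrix. -/
def sebHessI (c : Fin m → EuclideanSpace ℝ (Fin n)) (μ : ℝ)
    (x : EuclideanSpace ℝ (Fin n)) (i : Fin m) : Matrix (Fin n) (Fin n) ℝ :=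
  (sebG c μ x i)⁻¹ • (1 : Matrix (Fin n) (Fin n) ℝ)
    - ((sebG c μ x i) ^ 3)⁻¹ •
        Matrix.vecMulVec (fun j => (x - c i) j) (fun j => (x - c i) j)

/-- `∇²f(x;μ)` as an `n×n` matrix. -/
def sebHess (c : Fin m → EuclideanSpace ℝ (Fin n)) (r : Fin m → ℝ) (μ : ℝ)
    (x : EuclideanSpace ℝ (Fin n)) : Matrix (Fin n) (Fin n) ℝ :=
  (∑ i : Fin m, (sebLam c r μ x i • sebHessI c μ x i
      + (μ⁻¹ * sebLam c r μ x i) •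
          Matrix.vecMulVec (fun j => sebGradI c μ x i j) (fun j => sebGradI c μ x i j)))
    - μ⁻¹ • Matrix.vecMulVec (fun j => sebGrad c r μ x j) (fun j => sebGrad c r μ x j)

/-- `∇²f̃(x;μ)` as an `n×n` matrix. -/
def sebHessT (c : Fin m → EuclideanSpace ℝ (Fin n)) (r : Fin m → ℝ) (μ ε : ℝ)
    (x : EuclideanSpace ℝ (Fin n)) : Matrix (Fin n) (Fin n) ℝ :=
  (∑ i ∈ sebS c r μ ε x, (sebLamT c r μ ε x i • sebHessI c μ x i
      + (μ⁻¹ * sebLamT c r μ ε x i) •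
          Matrix.vecMulVec (fun j => sebGradI c μ x i j) (fun j => sebGradI c μ x i j)))
    - μ⁻¹ • Matrix.vecMulVec (fun j => sebGradT c r μ ε x j) (fun j => sebGradT c r μ ε x j)

end

theorem stmt_3 (n m : ℕ) (hm : 1 ≤ m) (c : Fin m → EuclideanSpace ℝ (Fin n))
    (r : Fin m → ℝ) (hr : ∀ i, 0 ≤ r i) (μ : ℝ) (hμ : 0 < μ)
    (x : EuclideanSpace ℝ (Fin n)) :
    HasGradientAt (sebFmu c r μ) (sebGrad c r μ x) x := by
  have hgpos : ∀ i, 0 < sebG c μ x i := fun i =>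
    Real.sqrt_pos.2 (by positivity)
  have hgsq : ∀ i, sebG c μ x i ^ 2 = ‖x - c i‖ ^ 2 + μ ^ 2 := fun i =>
    Real.sq_sqrt (by positivity)
  -- derivative of each g i
  have hg : ∀ i, HasFDerivAt (fun y => sebG c μ y i)
      ((sebG c μ x i)⁻¹ • (innerSL ℝ (x - c i))) x := by
    intro i
    have hsub : HasFDerivAt (fun y : EuclideanSpace ℝ (Fin n) => y - c i)
        (ContinuousLinearMap.id ℝ _) x := (hasFDerivAt_id x).sub_const _
    have hns := hsub.norm_sq
    have h1 : HasFDerivAt (fun y => ‖y - c i‖ ^ 2 + μ ^ 2)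
        (2 • (innerSL ℝ (x - c i)).comp (ContinuousLinearMap.id ℝ _)) x :=
      hns.add_const _
    have hne : ‖x - c i‖ ^ 2 + μ ^ 2 ≠ 0 := by positivity
    have h2 : HasFDerivAt (fun y => sebG c μ y i) _ x := h1.sqrt hne
    refine h2.congr_fderiv ?_
    ext y
    simp only [ContinuousLinearMap.smul_apply, ContinuousLinearMap.comp_id,
      ContinuousLinearMap.coe_smul', Pi.smul_apply, smul_eq_mul, two_smul,
      ContinuousLinearMap.add_apply]
    have : Real.sqrt (‖x - c i‖ ^ 2 + μ ^ 2) = sebG c μ x i := rfl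
    rw [this]
    have hgne : sebG c μ x i ≠ 0 := (hgpos i).ne'
    field_simp
    ring
  set S : ℝ := ∑ j : Fin m, Real.exp (sebFi c r μ x j / μ) with hS
  have hSpos : 0 < S := Finset.sum_pos (fun j _ => Real.exp_pos _)
    (Finset.univ_nonempty_iff.2 ⟨⟨0, hm⟩⟩)
  -- derivative of each exp(f i / μ)
  have hexp : ∀ i, HasFDerivAt (fun y => Real.exp (sebFi c r μ y i / μ))
      ((Real.exp (sebFi c r μ x i / μ) * μ⁻¹ * (sebG c μ x i)⁻¹) • innerSL ℝ (x - c i)) x := by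
    intro i
    have hfi : HasFDerivAt (fun y => sebFi c r μ y i)
        ((sebG c μ x i)⁻¹ • innerSL ℝ (x - c i)) x := (hg i).add_const _
    have hfi' : HasFDerivAt (fun y => sebFi c r μ y i / μ)
        (μ⁻¹ • ((sebG c μ x i)⁻¹ • innerSL ℝ (x - c i))) x := by
      simpa [div_eq_mul_inv, mul_comm] using hfi.mul_const μ⁻¹
    have := hfi'.exp
    refine this.congr_fderiv ?_
    ext y
    simp [mul_comm, mul_assoc, mul_left_comm, div_eq_mul_inv]
  have hsum : HasFDerivAt (fun y => ∑ i : Fin m, Real.exp (sebFi c r μ y i / μ))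
      (∑ i : Fin m, (Real.exp (sebFi c r μ x i / μ) * μ⁻¹ * (sebG c μ x i)⁻¹) •
        innerSL ℝ (x - c i)) x := HasFDerivAt.fun_sum (fun i _ => hexp i)
  have hlog := hsum.log hSpos.ne'
  have hfinal := hlog.const_mul μ
  rw [hasGradientAt_iff_hasFDerivAt]
  refine hfinal.congr_fderiv ?_
  ext y
  simp only [InnerProductSpace.toDual_apply_apply, ContinuousLinearMap.smul_apply,
    ContinuousLinearMap.coe_sum', Finset.sum_apply, smul_eq_mul]
  rw [sebGrad, sum_inner, Finset.mul_sum, Finset.mul_sum]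
  congr 1
  ext i
  rw [sebGradI, sebLam, real_inner_smul_left, real_inner_smul_left]
  have hgne : sebG c μ x i ≠ 0 := (hgpos i).ne'
  simp only [innerSL_apply_apply]
  field_simp
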